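/- For a poset R, a family of posets (S_i)_{i∈R}, and a family of games (G_j) indexed by the modular composition R[S_i], the ordered join satisfies the associativity identity (R[S_i]) ⋈ G = R ⋈ (i ↦ S_i ⋈ G|_{S_i}), i.e., the two games have identical game trees. -/

import Mathlib

universe u

/-- Nimbers (as in the older Mathlib): a type synonym for ordinals. -/
def Nimber : Type (u + 1) := Ordinal.{u}

/-- The identity map between nimbers and ordinals. -/
def Nimber.toOrdinal : Nimber.{u} ≃ Ordinal.{u} := Equiv.refl _

namespace SetTheory

/-- Pre-games, as in the older Mathlib (removed from Mathlib since). -/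
inductive PGame : Type (u + 1)
  | mk : ∀ α β : Type u, (α → PGame) → (β → PGame) → PGame

namespace PGame

def LeftMoves : PGame.{u} → Type u
  | mk l _ _ _ => l

def RightMoves : PGame.{u} → Type u
  | mk _ r _ _ => r

def moveLeft : ∀ g : PGame.{u}, LeftMoves g → PGame.{u}
  | mk _l _ L _ => L

def moveRight : ∀ g : PGame.{u}, RightMoves g → PGame.{u}
  | mk _ _r _ R => R

instance : Zero PGame :=
  ⟨⟨PEmpty, PEmpty, PEmpty.elim, PEmpty.elim⟩⟩

/-- Two pre-games are identical if their left and right sets are identical. -/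
def Identical : PGame.{u} → PGame.{u} → Prop
  | mk _ _ xL xR, mk _ _ yL yR =>
    Relator.BiTotal (fun i j ↦ Identical (xL i) (yL j)) ∧
      Relator.BiTotal (fun i j ↦ Identical (xR i) (yR j))

infix:50 " ≡ " => PGame.Identical

/-- The Grundy value of a game: the mex of the Grundy values of its (left) options. -/
noncomputable def grundyValue : PGame.{u} → Nimber.{u}
  | mk _ _ L _ => (sInf (Set.range fun i => (grundyValue (L i) : Ordinal.{u}))ᶜ : Ordinal.{u})

end PGame

end SetTheory

open SetTheory PGame Nimber

noncomputable section
open Classical in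
/-- The state resulting from a (Left) move in component `i₀` of an ordered join:
all components strictly above `i₀` are replaced by the empty game `0`. -/
def ojNextL {S : Type} [PartialOrder S] (x : S → PGame) (i₀ : S) (j : (x i₀).LeftMoves) :
    S → PGame :=
  fun i => if i = i₀ then (x i₀).moveLeft j else if i₀ < i then 0 else x i

open Classical in
def ojNextR {S : Type} [PartialOrder S] (x : S → PGame) (i₀ : S) (j : (x i₀).RightMoves) :
    S → PGame :=
  fun i => if i = i₀ then (x i₀).moveRight j else if i₀ < i then 0 else x i

/-- The move relation of the ordered join: `OJRel y x` iff `y` results from `x` by a single move. -/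
def OJRel {S : Type} [PartialOrder S] (y x : S → PGame) : Prop :=
  (∃ i₀ j, y = ojNextL x i₀ j) ∨ (∃ i₀ j, y = ojNextR x i₀ j)

theorem ojrel_L {S : Type} [PartialOrder S] (x : S → PGame) (i₀ : S) (j : (x i₀).LeftMoves) :
    OJRel (ojNextL x i₀ j) x := Or.inl ⟨i₀, j, rfl⟩

theorem ojrel_R {S : Type} [PartialOrder S] (x : S → PGame) (i₀ : S) (j : (x i₀).RightMoves) :
    OJRel (ojNextR x i₀ j) x := Or.inr ⟨i₀, j, rfl⟩

/-- The ordered join of a family of games, as a game, given a termination certificate. -/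
def ojoinAcc {S : Type} [PartialOrder S] : ∀ x : S → PGame, Acc OJRel x → PGame := fun x h =>
  Acc.rec (motive := fun x _ => PGame)
    (fun x _ ih =>
      PGame.mk (Σ i₀ : S, (x i₀).LeftMoves) (Σ i₀ : S, (x i₀).RightMoves)
        (fun p => ih _ (ojrel_L x p.1 p.2))
        (fun p => ih _ (ojrel_R x p.1 p.2))) h

open Classical in
/-- The ordered join `S ⋈ G` of a family of games `G` over the poset `S`.
(Defined as `0` in the degenerate non-terminating case.) -/
def ojoin {S : Type} [PartialOrder S] (x : S → PGame) : PGame :=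
  if h : Acc OJRel x then ojoinAcc x h else 0

/-- The Grundy set `Γ₁(G)`: the set of Grundy numbers of the options of `G`. -/
def grundySet (G : PGame) : Set Nimber :=
  Set.range fun i => grundyValue (G.moveLeft i)
end

/-- The modular composition `R[Sᵢ]` of a poset `R` with a family of posets `(Sᵢ)`:
the disjoint union `⊔ᵢ Sᵢ`, with the inherited order inside each `Sᵢ`, and
`j₁ ≤ j₂` whenever `j₁ ∈ S_{i₁}`, `j₂ ∈ S_{i₂}` with `i₁ < i₂`. -/
def MComp (R : Type) (S : R → Type) : Type := Σ i, S i

instance MComp.instPartialOrder (R : Type) [PartialOrder R] (S : R → Type)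
    [∀ i, PartialOrder (S i)] : PartialOrder (MComp R S) where
  le a b := a.1 < b.1 ∨ ∃ h : a.1 = b.1, (h ▸ a.2 : S b.1) ≤ b.2
  le_refl a := Or.inr ⟨rfl, le_rfl⟩
  le_trans := by
    rintro ⟨i, x⟩ ⟨j, y⟩ ⟨k, z⟩ h₁ h₂
    dsimp only at h₁ h₂ ⊢
    rcases h₁ with h₁ | ⟨h, h₁⟩
    · rcases h₂ with h₂ | ⟨h, h₂⟩
      · exact Or.inl (h₁.trans h₂)
      · exact Or.inl (h ▸ h₁)
    · subst h
      rcases h₂ with h₂ | ⟨h, h₂⟩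
      · exact Or.inl h₂
      · subst h
        exact Or.inr ⟨rfl, le_trans h₁ h₂⟩
  le_antisymm := by
    rintro ⟨i, x⟩ ⟨j, y⟩ h₁ h₂
    dsimp only at h₁ h₂
    rcases h₁ with h₁ | ⟨h, h₁⟩
    · rcases h₂ with h₂ | ⟨h, h₂⟩
      · exact absurd (h₁.trans h₂) (lt_irrefl _)
      · subst h
        exact absurd h₁ (lt_irrefl _)
    · subst h
      rcases h₂ with h₂ | ⟨h, h₂⟩
      · exact absurd h₂ (lt_irrefl _)
      · exact congrArg (fun t => (⟨i, t⟩ : MComp R S)) (le_antisymm h₁ h₂)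


section Aux
open SetTheory PGame

theorem moveLeft_cast {a b : PGame} (e : a = b) (i : a.LeftMoves) :
    a.moveLeft i = b.moveLeft (cast (congrArg PGame.LeftMoves e) i) := by subst e; rfl

theorem moveRight_cast {a b : PGame} (e : a = b) (i : a.RightMoves) :
    a.moveRight i = b.moveRight (cast (congrArg PGame.RightMoves e) i) := by subst e; rfl

def elim_left_zero {a : PGame} (e : a = 0) (m : a.LeftMoves) {C : Sort*} : C :=
  PEmpty.elim (cast (congrArg PGame.LeftMoves e) m)

def elim_right_zero {a : PGame} (e : a = 0) (m : a.RightMoves) {C : Sort*} : C :=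
  PEmpty.elim (cast (congrArg PGame.RightMoves e) m)

noncomputable def ojmk {T : Type} [PartialOrder T] (x : T → PGame) : PGame :=
  PGame.mk (Σ i₀ : T, (x i₀).LeftMoves) (Σ i₀ : T, (x i₀).RightMoves)
    (fun p => ojoin (ojNextL x p.1 p.2)) (fun p => ojoin (ojNextR x p.1 p.2))

theorem ojoin_eq {T : Type} [PartialOrder T] (x : T → PGame) (h : Acc OJRel x) :
    ojoin x = ojmk x := by
  rw [ojoin, dif_pos h]
  induction h with
  | intro x g _ =>
    show PGame.mk _ _ _ _ = _
    unfold ojmk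
    refine congrArg₂ (PGame.mk _ _) ?_ ?_ <;> funext p
    · rw [ojoin, dif_pos (g _ (ojrel_L x p.1 p.2))]; rfl
    · rw [ojoin, dif_pos (g _ (ojrel_R x p.1 p.2))]; rfl

end Aux

section Aux2
open SetTheory PGame
variable {R : Type} [PartialOrder R] {S : R → Type} [∀ i, PartialOrder (S i)]

/-- Typed constructor for `MComp`, to pin down the `MComp` order instance. -/
abbrev MComp.m (i : R) (j : S i) : MComp R S := ⟨i, j⟩

theorem MComp.le_elim {a b : MComp R S} (h : a ≤ b) :
    a.1 < b.1 ∨ ∃ e : a.1 = b.1, (e ▸ a.2 : S b.1) ≤ b.2 := h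

theorem MComp.le_intro {a b : MComp R S}
    (h : a.1 < b.1 ∨ ∃ e : a.1 = b.1, (e ▸ a.2 : S b.1) ≤ b.2) : a ≤ b := h

theorem MComp.mk_eq_mk {i : R} {a b : S i} :
    (MComp.m (S := S) i a = MComp.m i b) ↔ a = b :=
  ⟨fun h => by injection h with h₁ h₂, fun h => by rw [h]⟩

theorem MComp.fst_eq {i₁ i₂ : R} {j₁ : S i₁} {j₂ : S i₂}
    (h : MComp.m (S := S) i₁ j₁ = MComp.m i₂ j₂) : i₁ = i₂ := by
  injection h

theorem MComp.mk_lt_mk_of_lt {i₁ i₂ : R} (h : i₁ < i₂) (j₁ : S i₁) (j₂ : S i₂) :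
    MComp.m (S := S) i₁ j₁ < MComp.m i₂ j₂ := by
  refine lt_of_le_not_ge (MComp.le_intro (Or.inl h)) fun hle => ?_
  rcases MComp.le_elim hle with h' | ⟨e, h'⟩
  · exact absurd (h.trans h') (lt_irrefl _)
  · exact absurd h (by rw [show i₁ = i₂ from e.symm]; exact lt_irrefl _)

theorem MComp.mk_lt_mk_same {i : R} {a b : S i} :
    MComp.m (S := S) i a < MComp.m i b ↔ a < b := by
  constructor
  · intro h
    rcases MComp.le_elim h.le with h₁ | ⟨e, h₁⟩
    · exact absurd h₁ (lt_irrefl _)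
    · exact lt_of_le_not_ge h₁ fun hba => h.not_ge (MComp.le_intro (Or.inr ⟨rfl, hba⟩))
  · intro h
    refine lt_of_le_not_ge (MComp.le_intro (Or.inr ⟨rfl, h.le⟩)) fun hle => ?_
    rcases MComp.le_elim hle with h' | ⟨e, h'⟩
    · exact lt_irrefl _ h'
    · exact h.not_ge h'

theorem MComp.not_lt_mk {i₁ i₂ : R} (h1 : i₁ ≠ i₂) (h2 : ¬ i₁ < i₂) (j₁ : S i₁) (j₂ : S i₂) :
    ¬ (MComp.m (S := S) i₁ j₁ < MComp.m i₂ j₂) := fun h =>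
  (MComp.le_elim h.le).elim h2 fun ⟨e, _⟩ => h1 e

theorem ojNextL_self {T : Type} [PartialOrder T] (x : T → PGame) (i₀ : T) (j) :
    ojNextL x i₀ j i₀ = (x i₀).moveLeft j := if_pos rfl

theorem ojNextL_gt {T : Type} [PartialOrder T] (x : T → PGame) {i₀ i : T} (j) (h : i₀ < i) :
    ojNextL x i₀ j i = 0 := by
  rw [ojNextL, if_neg (fun e : i = i₀ => absurd (e ▸ h) (lt_irrefl i₀)), if_pos h]

theorem ojNextL_other {T : Type} [PartialOrder T] (x : T → PGame) {i₀ i : T} (j)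
    (h1 : i ≠ i₀) (h2 : ¬ i₀ < i) : ojNextL x i₀ j i = x i := by
  rw [ojNextL, if_neg h1, if_neg h2]

theorem ojNextR_self {T : Type} [PartialOrder T] (x : T → PGame) (i₀ : T) (j) :
    ojNextR x i₀ j i₀ = (x i₀).moveRight j := if_pos rfl

theorem ojNextR_gt {T : Type} [PartialOrder T] (x : T → PGame) {i₀ i : T} (j) (h : i₀ < i) :
    ojNextR x i₀ j i = 0 := by
  rw [ojNextR, if_neg (fun e : i = i₀ => absurd (e ▸ h) (lt_irrefl i₀)), if_pos h]

theorem ojNextR_other {T : Type} [PartialOrder T] (x : T → PGame) {i₀ i : T} (j)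
    (h1 : i ≠ i₀) (h2 : ¬ i₀ < i) : ojNextR x i₀ j i = x i := by
  rw [ojNextR, if_neg h1, if_neg h2]

theorem restrict_ojNextL (y : MComp R S → PGame) (i₀ : R) (j : S i₀)
    (k : (y ⟨i₀, j⟩).LeftMoves) :
    (fun s : S i₀ => ojNextL y ⟨i₀, j⟩ k ⟨i₀, s⟩) = ojNextL (fun s : S i₀ => y ⟨i₀, s⟩) j k := by
  funext s
  by_cases hs : s = j
  · subst hs
    exact (ojNextL_self (T := MComp R S) _ _ _).trans (ojNextL_self (fun s => y ⟨i₀, s⟩) s k).symm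
  · by_cases hlt : j < s
    · rw [ojNextL_gt y _ (MComp.mk_lt_mk_same.2 hlt), ojNextL_gt _ _ hlt]
    · rw [ojNextL_other y _ (fun e => hs (MComp.mk_eq_mk.1 e))
        (fun h => hlt (MComp.mk_lt_mk_same.1 h)),
        ojNextL_other _ _ hs hlt]

theorem restrict_ojNextR (y : MComp R S → PGame) (i₀ : R) (j : S i₀)
    (k : (y ⟨i₀, j⟩).RightMoves) :
    (fun s : S i₀ => ojNextR y ⟨i₀, j⟩ k ⟨i₀, s⟩) = ojNextR (fun s : S i₀ => y ⟨i₀, s⟩) j k := by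
  funext s
  by_cases hs : s = j
  · subst hs
    exact (ojNextR_self (T := MComp R S) _ _ _).trans (ojNextR_self (fun s => y ⟨i₀, s⟩) s k).symm
  · by_cases hlt : j < s
    · rw [ojNextR_gt y _ (MComp.mk_lt_mk_same.2 hlt), ojNextR_gt _ _ hlt]
    · rw [ojNextR_other y _ (fun e => hs (MComp.mk_eq_mk.1 e))
        (fun h => hlt (MComp.mk_lt_mk_same.1 h)),
        ojNextR_other _ _ hs hlt]

end Aux2

section Aux3
open SetTheory PGame
variable {R : Type} [PartialOrder R] {S : R → Type} [∀ i, PartialOrder (S i)]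

theorem acc_restrict {y : MComp R S → PGame} (h : Acc OJRel y) :
    ∀ (i : R) (w : S i → PGame), (∀ j, w j = y ⟨i, j⟩) → Acc OJRel w := by
  induction h with
  | intro y g ih =>
    intro i w hw
    constructor
    rintro w' (⟨j₀, k, rfl⟩ | ⟨j₀, k, rfl⟩)
    · have e : w j₀ = y ⟨i, j₀⟩ := hw j₀
      refine ih (ojNextL y ⟨i, j₀⟩ (cast (congrArg PGame.LeftMoves e) k)) (ojrel_L ..) i _ ?_
      intro s
      by_cases hs : s = j₀
      · subst hs
        rw [ojNextL_self]; exact (moveLeft_cast e k).trans (ojNextL_self (T := MComp R S) _ _ _).symm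
      · by_cases hlt : j₀ < s
        · rw [ojNextL_gt _ _ hlt, ojNextL_gt y _ (MComp.mk_lt_mk_same.2 hlt)]
        · rw [ojNextL_other _ _ hs hlt,
            ojNextL_other y _ (fun e' => hs (MComp.mk_eq_mk.1 e'))
              (fun h' => hlt (MComp.mk_lt_mk_same.1 h'))]
          exact hw s
    · have e : w j₀ = y ⟨i, j₀⟩ := hw j₀
      refine ih (ojNextR y ⟨i, j₀⟩ (cast (congrArg PGame.RightMoves e) k)) (ojrel_R ..) i _ ?_
      intro s
      by_cases hs : s = j₀
      · subst hs
        rw [ojNextR_self]; exact (moveRight_cast e k).trans (ojNextR_self (T := MComp R S) _ _ _).symm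
      · by_cases hlt : j₀ < s
        · rw [ojNextR_gt _ _ hlt, ojNextR_gt y _ (MComp.mk_lt_mk_same.2 hlt)]
        · rw [ojNextR_other _ _ hs hlt,
            ojNextR_other y _ (fun e' => hs (MComp.mk_eq_mk.1 e'))
              (fun h' => hlt (MComp.mk_lt_mk_same.1 h'))]
          exact hw s

theorem exists_equiv_L {y : MComp R S → PGame} (i₀ : R)
    (hA : Acc OJRel (fun s : S i₀ => y ⟨i₀, s⟩)) {x : R → PGame}
    (e : x i₀ = ojoin (fun s : S i₀ => y ⟨i₀, s⟩)) :
    ∃ f : (Σ s : S i₀, (y ⟨i₀, s⟩).LeftMoves) ≃ (x i₀).LeftMoves,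
      ∀ (j : S i₀) (k : (y ⟨i₀, j⟩).LeftMoves),
        (x i₀).moveLeft (f ⟨j, k⟩) = ojoin (fun s : S i₀ => ojNextL y ⟨i₀, j⟩ k ⟨i₀, s⟩) := by
  have e2 : x i₀ = ojmk (fun s : S i₀ => y ⟨i₀, s⟩) := e.trans (ojoin_eq _ hA)
  refine ⟨(Equiv.cast (congrArg PGame.LeftMoves e2)).symm, fun j k => ?_⟩
  rw [restrict_ojNextL, moveLeft_cast e2]
  exact congrArg (ojmk fun s => y ⟨i₀, s⟩).moveLeft ((cast_cast _ _ _).trans (cast_eq _ _))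

theorem exists_equiv_R {y : MComp R S → PGame} (i₀ : R)
    (hA : Acc OJRel (fun s : S i₀ => y ⟨i₀, s⟩)) {x : R → PGame}
    (e : x i₀ = ojoin (fun s : S i₀ => y ⟨i₀, s⟩)) :
    ∃ f : (Σ s : S i₀, (y ⟨i₀, s⟩).RightMoves) ≃ (x i₀).RightMoves,
      ∀ (j : S i₀) (k : (y ⟨i₀, j⟩).RightMoves),
        (x i₀).moveRight (f ⟨j, k⟩) = ojoin (fun s : S i₀ => ojNextR y ⟨i₀, j⟩ k ⟨i₀, s⟩) := by
  have e2 : x i₀ = ojmk (fun s : S i₀ => y ⟨i₀, s⟩) := e.trans (ojoin_eq _ hA)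
  refine ⟨(Equiv.cast (congrArg PGame.RightMoves e2)).symm, fun j k => ?_⟩
  rw [restrict_ojNextR, moveRight_cast e2]
  exact congrArg (ojmk fun s => y ⟨i₀, s⟩).moveRight ((cast_cast _ _ _).trans (cast_eq _ _))

def OJInv (x : R → PGame) (y : MComp R S → PGame) : Prop :=
  ∀ i, x i = ojoin (fun s : S i => y ⟨i, s⟩) ∨ (x i = 0 ∧ ∀ s : S i, y ⟨i, s⟩ = 0)

theorem inv_step_L {y : MComp R S → PGame} {x : R → PGame} (hx : OJInv x y)
    (i₀ : R) (j : S i₀) (k : (y ⟨i₀, j⟩).LeftMoves) (m : (x i₀).LeftMoves)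
    (hm : (x i₀).moveLeft m = ojoin (fun s : S i₀ => ojNextL y ⟨i₀, j⟩ k ⟨i₀, s⟩)) :
    OJInv (ojNextL x i₀ m) (ojNextL y ⟨i₀, j⟩ k) := by
  intro i
  by_cases hi : i = i₀
  · subst hi
    left
    rw [ojNextL_self]
    exact hm
  · by_cases hlt : i₀ < i
    · exact Or.inr ⟨ojNextL_gt _ _ hlt, fun s => ojNextL_gt y _ (MComp.mk_lt_mk_of_lt hlt j s)⟩
    · have hys : ∀ s : S i, ojNextL y ⟨i₀, j⟩ k ⟨i, s⟩ = y ⟨i, s⟩ := fun s =>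
        ojNextL_other y _ (fun e' => hi (MComp.fst_eq e'))
          (MComp.not_lt_mk (fun e' => hi e'.symm) hlt j s)
      rw [ojNextL_other x _ hi hlt]
      rcases hx i with e | ⟨e0, hz⟩
      · left
        rw [e]
        congr 1
        funext s
        exact (hys s).symm
      · exact Or.inr ⟨e0, fun s => (hys s).trans (hz s)⟩

theorem inv_step_R {y : MComp R S → PGame} {x : R → PGame} (hx : OJInv x y)
    (i₀ : R) (j : S i₀) (k : (y ⟨i₀, j⟩).RightMoves) (m : (x i₀).RightMoves)
    (hm : (x i₀).moveRight m = ojoin (fun s : S i₀ => ojNextR y ⟨i₀, j⟩ k ⟨i₀, s⟩)) :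
    OJInv (ojNextR x i₀ m) (ojNextR y ⟨i₀, j⟩ k) := by
  intro i
  by_cases hi : i = i₀
  · subst hi
    left
    rw [ojNextR_self]
    exact hm
  · by_cases hlt : i₀ < i
    · exact Or.inr ⟨ojNextR_gt _ _ hlt, fun s => ojNextR_gt y _ (MComp.mk_lt_mk_of_lt hlt j s)⟩
    · have hys : ∀ s : S i, ojNextR y ⟨i₀, j⟩ k ⟨i, s⟩ = y ⟨i, s⟩ := fun s =>
        ojNextR_other y _ (fun e' => hi (MComp.fst_eq e'))
          (MComp.not_lt_mk (fun e' => hi e'.symm) hlt j s)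
      rw [ojNextR_other x _ hi hlt]
      rcases hx i with e | ⟨e0, hz⟩
      · left
        rw [e]
        congr 1
        funext s
        exact (hys s).symm
      · exact Or.inr ⟨e0, fun s => (hys s).trans (hz s)⟩

theorem acc_outer {y : MComp R S → PGame} (h : Acc OJRel y) :
    ∀ x : R → PGame, OJInv x y → Acc OJRel x := by
  induction h with
  | intro y g ih =>
    intro x hx
    have hy : Acc OJRel y := ⟨y, g⟩
    constructor
    rintro x' (⟨i₀, m, rfl⟩ | ⟨i₀, m, rfl⟩)
    · rcases hx i₀ with e | ⟨e0, hz⟩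
      · obtain ⟨f, hf⟩ := exists_equiv_L i₀ (acc_restrict hy i₀ _ fun s => rfl) e
        obtain ⟨⟨j, k⟩, hjk⟩ : ∃ p, f p = m := ⟨f.symm m, f.apply_symm_apply m⟩
        have hm := hf j k
        rw [hjk] at hm
        exact ih _ (ojrel_L y ⟨i₀, j⟩ k) _ (inv_step_L hx i₀ j k m hm)
      · exact elim_left_zero e0 m
    · rcases hx i₀ with e | ⟨e0, hz⟩
      · obtain ⟨f, hf⟩ := exists_equiv_R i₀ (acc_restrict hy i₀ _ fun s => rfl) e
        obtain ⟨⟨j, k⟩, hjk⟩ : ∃ p, f p = m := ⟨f.symm m, f.apply_symm_apply m⟩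
        have hm := hf j k
        rw [hjk] at hm
        exact ih _ (ojrel_R y ⟨i₀, j⟩ k) _ (inv_step_R hx i₀ j k m hm)
      · exact elim_right_zero e0 m

theorem oj_main {y : MComp R S → PGame} (h : Acc OJRel y) :
    ∀ x : R → PGame, OJInv x y → ojoin y ≡ ojoin x := by
  induction h with
  | intro y g ih =>
    intro x hx
    have hy : Acc OJRel y := ⟨y, g⟩
    have hxacc : Acc OJRel x := acc_outer hy x hx
    rw [ojoin_eq y hy, ojoin_eq x hxacc]
    unfold ojmk; rw [PGame.Identical]
    constructor
    · constructor
      · rintro ⟨p, k⟩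
        rcases hx p.1 with e | ⟨e0, hz⟩
        · obtain ⟨f, hf⟩ := exists_equiv_L p.1 (acc_restrict hy p.1 _ fun s => rfl) e
          exact ⟨⟨p.1, f ⟨p.2, k⟩⟩, ih _ (ojrel_L y ⟨p.1, p.2⟩ k) _
            (inv_step_L hx p.1 p.2 k _ (hf p.2 k))⟩
        · exact elim_left_zero (hz p.2) k
      · rintro ⟨i₀, m⟩
        rcases hx i₀ with e | ⟨e0, hz⟩
        · obtain ⟨f, hf⟩ := exists_equiv_L i₀ (acc_restrict hy i₀ _ fun s => rfl) e
          obtain ⟨⟨j, k⟩, hjk⟩ : ∃ p, f p = m := ⟨f.symm m, f.apply_symm_apply m⟩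
          have hm := hf j k
          rw [hjk] at hm
          exact ⟨⟨⟨i₀, j⟩, k⟩, ih _ (ojrel_L y ⟨i₀, j⟩ k) _ (inv_step_L hx i₀ j k m hm)⟩
        · exact elim_left_zero e0 m
    · constructor
      · rintro ⟨p, k⟩
        rcases hx p.1 with e | ⟨e0, hz⟩
        · obtain ⟨f, hf⟩ := exists_equiv_R p.1 (acc_restrict hy p.1 _ fun s => rfl) e
          exact ⟨⟨p.1, f ⟨p.2, k⟩⟩, ih _ (ojrel_R y ⟨p.1, p.2⟩ k) _
            (inv_step_R hx p.1 p.2 k _ (hf p.2 k))⟩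
        · exact elim_right_zero (hz p.2) k
      · rintro ⟨i₀, m⟩
        rcases hx i₀ with e | ⟨e0, hz⟩
        · obtain ⟨f, hf⟩ := exists_equiv_R i₀ (acc_restrict hy i₀ _ fun s => rfl) e
          obtain ⟨⟨j, k⟩, hjk⟩ : ∃ p, f p = m := ⟨f.symm m, f.apply_symm_apply m⟩
          have hm := hf j k
          rw [hjk] at hm
          exact ⟨⟨⟨i₀, j⟩, k⟩, ih _ (ojrel_R y ⟨i₀, j⟩ k) _ (inv_step_R hx i₀ j k m hm)⟩
        · exact elim_right_zero e0 m

end Aux3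
open scoped PGame in
/-- associativity of the ordered join: for a family of games indexed by the
modular composition `R[Sᵢ]`, the games `(R[Sᵢ]) ⋈ G` and `R ⋈ (i ↦ Sᵢ ⋈ G|_{Sᵢ})` are
identical (have identical game trees). -/
theorem ojoin_mcomp {R : Type} [PartialOrder R] (S : R → Type) [∀ i, PartialOrder (S i)]
    (G : MComp R S → PGame) (h : Acc OJRel G) :
    ojoin G ≡ ojoin fun i : R => ojoin fun j : S i => G ⟨i, j⟩ := by
  exact oj_main h _ (fun i => Or.inl rfl)
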